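/- Let σ : SL(2,ℂ) → SL(2,ℂ) be σ(g) = (gᵗ)⁻¹. The set M_σ = { g·σ(g)⁻¹ : g ∈ SU(2) } equals the set of matrices in SU(2) of the form [[z, is],[is, z̄]] with z ∈ ℂ, s ∈ ℝ, |z|² + s² = 1; equivalently, y ∈ SU(2) lies in M_σ if and only if yᵗ = y. -/

import Mathlib

open Matrix ComplexConjugate

/-- The set `SU(2)` as 2×2 complex matrices. -/
def SU2 : Set (Matrix (Fin 2) (Fin 2) ℂ) :=
  {g | gᴴ * g = 1 ∧ g.det = 1}

lemma ct2 (a b c d : ℂ) : !![a,b;c,d]ᴴ = !![conj a, conj c; conj b, conj d] := by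
  ext i j
  fin_cases i <;> fin_cases j <;>
    simp [conjTranspose_apply, Complex.star_def]

lemma tr2 (a b c d : ℂ) : !![a,b;c,d]ᵀ = !![a,c;b,d] := by
  ext i j
  fin_cases i <;> fin_cases j <;> simp

lemma entry2 {a b c d a' b' c' d' : ℂ} (h00 : a = a') (h01 : b = b')
    (h10 : c = c') (h11 : d = d') : !![a,b;c,d] = !![a',b';c',d'] := by
  subst h00 h01 h10 h11; rfl

lemma su2_iff (a b c d : ℂ) :
    !![a, b; c, d] ∈ SU2 ↔
      d = conj a ∧ b = -conj c ∧ Complex.normSq a + Complex.normSq c = 1 := by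
  constructor
  · rintro ⟨hu, hd⟩
    rw [ct2, Matrix.mul_fin_two] at hu
    have E1 : conj a * a + conj c * c = 1 := by
      have := congrFun (congrFun hu 0) 0; simpa [Matrix.one_apply] using this
    have E2 : conj a * b + conj c * d = 0 := by
      have := congrFun (congrFun hu 0) 1; simpa [Matrix.one_apply] using this
    rw [Matrix.det_fin_two_of] at hd
    refine ⟨by linear_combination -d * E1 + c * E2 + conj a * hd,
            by linear_combination -b * E1 + a * E2 - conj c * hd, ?_⟩
    have : (Complex.normSq a : ℂ) + (Complex.normSq c : ℂ) = 1 := by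
      rw [← Complex.normSq_eq_conj_mul_self, ← Complex.normSq_eq_conj_mul_self] at E1
      exact E1
    exact_mod_cast this
  · rintro ⟨hd, hb, hn⟩
    subst hd hb
    have h1 : conj a * a + conj c * c = 1 := by
      rw [← Complex.normSq_eq_conj_mul_self, ← Complex.normSq_eq_conj_mul_self]
      exact_mod_cast hn
    constructor
    · rw [ct2, Matrix.mul_fin_two, Matrix.one_fin_two]
      simp only [map_neg, RingHomCompTriple.comp_apply, RingHom.id_apply,
        Complex.conj_conj]
      exact entry2 (by linear_combination h1) (by ring) (by ring)
        (by linear_combination h1)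
    · rw [Matrix.det_fin_two_of]
      linear_combination h1

/-- If `g ∈ SU2` then `y = g * gᵀ` has the announced normal form. -/
lemma M_sub_A {g : Matrix (Fin 2) (Fin 2) ℂ} (hg : g ∈ SU2) :
    ∃ (z : ℂ) (s : ℝ), ‖z‖ ^ 2 + s ^ 2 = 1 ∧
      g * gᵀ = !![z, Complex.I * (s : ℂ); Complex.I * (s : ℂ), conj z] := by
  set a := g 0 0 with ha
  set c := g 1 0 with hc
  rw [Matrix.eta_fin_two g] at hg
  rw [su2_iff] at hg
  obtain ⟨hd, hb, hn⟩ := hg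
  have hgeq : g = !![a, -conj c; c, conj a] := by
    rw [Matrix.eta_fin_two g, ← ha, ← hc, hd, hb]
  refine ⟨a^2 + (conj c)^2, 2 * (a*c).im, ?_, ?_⟩
  · -- |z|² + s² = 1
    have hs : a*c - conj a * conj c = ((2*(a*c).im : ℝ) : ℂ) * Complex.I := by
      rw [← _root_.map_mul]; exact Complex.sub_conj (a*c)
    have hnc : a * conj a + c * conj c = 1 := by
      have : (Complex.normSq a : ℂ) + (Complex.normSq c : ℂ) = 1 := by exact_mod_cast hn
      rw [Complex.normSq_eq_conj_mul_self, Complex.normSq_eq_conj_mul_self] at this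
      linear_combination this
    have key : ((a^2 + (conj c)^2) * conj (a^2 + (conj c)^2) : ℂ)
        + ((2*(a*c).im : ℝ) : ℂ)^2 = 1 := by
      have hconjz : conj (a^2 + (conj c)^2) = (conj a)^2 + c^2 := by
        simp [map_add, map_pow]
      rw [hconjz]
      linear_combination (a*c - conj a * conj c + ((2*(a*c).im : ℝ):ℂ) * Complex.I) * hs
        + (a * conj a + c * conj c + 1) * hnc
        + ((2*(a*c).im : ℝ):ℂ)^2 * Complex.I_sq
    rw [Complex.sq_norm]
    have : (Complex.normSq (a^2 + (conj c)^2) : ℂ) + (((2*(a*c).im : ℝ))^2 : ℝ) = 1 := by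
      rw [Complex.normSq_eq_conj_mul_self]
      push_cast
      push_cast at key
      linear_combination key
    exact_mod_cast this
  · -- matrix equality
    have hs : a*c - conj a * conj c = ((2*(a*c).im : ℝ) : ℂ) * Complex.I := by
      rw [← _root_.map_mul]; exact Complex.sub_conj (a*c)
    rw [hgeq, tr2, Matrix.mul_fin_two]
    refine entry2 (by ring) (by linear_combination hs) (by linear_combination hs) ?_
    simp [map_add, map_pow]
    ring

lemma tct (g : Matrix (Fin 2) (Fin 2) ℂ) : (gᵀ)ᴴ = (gᴴ)ᵀ := by
  ext i j; simp [conjTranspose_apply]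

lemma M_sub_B {g : Matrix (Fin 2) (Fin 2) ℂ} (hg : g ∈ SU2) :
    g * gᵀ ∈ SU2 ∧ (g * gᵀ)ᵀ = g * gᵀ := by
  obtain ⟨hu, hd⟩ := hg
  have hcom : g * gᴴ = 1 := mul_eq_one_comm.mp hu
  refine ⟨⟨?_, ?_⟩, ?_⟩
  · calc (g * gᵀ)ᴴ * (g * gᵀ) = (gᵀ)ᴴ * ((gᴴ * g) * gᵀ) := by
          rw [Matrix.conjTranspose_mul, Matrix.mul_assoc, Matrix.mul_assoc]
      _ = (gᵀ)ᴴ * gᵀ := by rw [hu, Matrix.one_mul]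
      _ = (g * gᴴ)ᵀ := by rw [Matrix.transpose_mul, tct]
      _ = 1 := by rw [hcom, Matrix.transpose_one]
  · rw [Matrix.det_mul, Matrix.det_transpose, hd, mul_one]
  · rw [Matrix.transpose_mul, Matrix.transpose_transpose]

lemma B_sub_A {y : Matrix (Fin 2) (Fin 2) ℂ} (hy : y ∈ SU2) (hsym : yᵀ = y) :
    ∃ (z : ℂ) (s : ℝ), ‖z‖ ^ 2 + s ^ 2 = 1 ∧
      y = !![z, Complex.I * (s : ℂ); Complex.I * (s : ℂ), conj z] := by
  have hy' := hy
  rw [Matrix.eta_fin_two y, su2_iff] at hy'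
  obtain ⟨hd, hb, hn⟩ := hy'
  have h01 : y 0 1 = y 1 0 := by
    conv_lhs => rw [← hsym]
    rfl
  have hre : (y 1 0).re = 0 := by
    have := hb.symm.trans h01
    have hre' := congrArg Complex.re this
    simp at hre'
    linarith
  have h10 : y 1 0 = Complex.I * ((y 1 0).im : ℂ) := by
    apply Complex.ext <;> simp [hre]
  refine ⟨y 0 0, (y 1 0).im, ?_, ?_⟩
  · rw [Complex.sq_norm]
    have : Complex.normSq (y 1 0) = (y 1 0).im ^ 2 := by
      rw [Complex.normSq_apply, hre]; ring
    rw [← this]; exact hn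
  · conv_lhs => rw [Matrix.eta_fin_two y]
    exact entry2 rfl (h01.trans h10) h10 hd

lemma A_sub_M (z : ℂ) (s : ℝ) (h : ‖z‖ ^ 2 + s ^ 2 = 1) :
    ∃ g ∈ SU2, !![z, Complex.I * (s:ℂ); Complex.I * (s:ℂ), conj z] = g * gᵀ := by
  set x := z.re with hxdef
  set t := z.im with htdef
  have hx : x ^ 2 + t ^ 2 + s ^ 2 = 1 := by
    rw [Complex.sq_norm, Complex.normSq_apply] at h
    nlinarith [h]
  by_cases hx1 : x = -1
  · have ht0 : t = 0 := by nlinarith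
    have hs0 : s = 0 := by nlinarith
    have hz : z = -1 := by
      apply Complex.ext <;> simp [← hxdef, ← htdef, hx1, ht0]
    refine ⟨!![Complex.I, 0; 0, -Complex.I], ?_, ?_⟩
    · rw [su2_iff]
      refine ⟨by simp, by simp, by simp⟩
    · rw [tr2, Matrix.mul_fin_two, hz, hs0]
      exact entry2 (by simp) (by simp) (by simp) (by simp)
  · have hxle : -1 ≤ x := by nlinarith
    have hxgt : -1 < x := lt_of_le_of_ne hxle (Ne.symm hx1)
    set c : ℝ := Real.sqrt ((1 + x) / 2) with hcdef
    have hcpos : 0 < c := Real.sqrt_pos.mpr (by linarith)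
    have hc2 : c ^ 2 = (1 + x) / 2 := Real.sq_sqrt (by linarith)
    have hcne : (c : ℝ) ≠ 0 := ne_of_gt hcpos
    set u : ℝ := t / (2 * c) with hudef
    set v : ℝ := s / (2 * c) with hvdef
    have hu : 2 * c * u = t := by rw [hudef]; field_simp
    have hv : 2 * c * v = s := by rw [hvdef]; field_simp
    have hsq : ((2*c)^2 : ℝ) ≠ 0 := by positivity
    have hw : c ^ 2 - u ^ 2 - v ^ 2 = x := by
      refine mul_left_cancel₀ hsq ?_
      linear_combination (-(2*c*u+t))*hu + (-(2*c*v+s))*hv + (4*c^2+2-2*x)*hc2 - hx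
    have hn1 : c ^ 2 + u ^ 2 + v ^ 2 = 1 := by
      refine mul_left_cancel₀ hsq ?_
      linear_combination (2*c*u+t)*hu + (2*c*v+s)*hv + (4*c^2+2*x-2)*hc2 + hx
    refine ⟨!![(c:ℂ) + (u:ℂ) * Complex.I, (v:ℂ) * Complex.I;
              (v:ℂ) * Complex.I, (c:ℂ) - (u:ℂ) * Complex.I], ?_, ?_⟩
    · rw [su2_iff]
      refine ⟨by simp [map_add, _root_.map_mul, Complex.conj_ofReal, Complex.conj_I]; try ring,
              by simp [_root_.map_mul, Complex.conj_ofReal, Complex.conj_I]; try ring, ?_⟩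
      have h1 : Complex.normSq ((c:ℂ) + (u:ℂ) * Complex.I) = c^2 + u^2 := by
        rw [Complex.normSq_apply]; simp; ring
      have h2 : Complex.normSq ((v:ℂ) * Complex.I) = v^2 := by
        rw [Complex.normSq_apply]; simp; ring
      rw [h1, h2]; linarith
    · rw [tr2, Matrix.mul_fin_two]
      have huc : 2 * (c:ℂ) * (u:ℂ) = (t:ℂ) := by exact_mod_cast congrArg Complex.ofReal hu
      have hvc : 2 * (c:ℂ) * (v:ℂ) = (s:ℂ) := by exact_mod_cast congrArg Complex.ofReal hv
      have hwc : (c:ℂ)^2 - (u:ℂ)^2 - (v:ℂ)^2 = (x:ℂ) := by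
        exact_mod_cast congrArg Complex.ofReal hw
      have hzc : z = (x:ℂ) + (t:ℂ) * Complex.I := (Complex.re_add_im z).symm
      have hzcc : conj z = (x:ℂ) - (t:ℂ) * Complex.I := by
        rw [hzc]; simp [map_add, _root_.map_mul, Complex.conj_ofReal, Complex.conj_I]; try ring
      refine entry2 ?_ ?_ ?_ ?_
      · rw [hzc]
        linear_combination -hwc - Complex.I * huc - ((u:ℂ)^2 + (v:ℂ)^2) * Complex.I_sq
      · linear_combination -Complex.I * hvc
      · linear_combination -Complex.I * hvc
      · rw [hzcc]
        linear_combination -hwc + Complex.I * huc - ((u:ℂ)^2 + (v:ℂ)^2) * Complex.I_sq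

/-- `M_σ = { g gᵗ : g ∈ SU(2) }` equals the set of matrices
`[[z, is],[is, z̄]]` with `|z|² + s² = 1`, and equals `{ y ∈ SU(2) : yᵗ = y }`. -/
theorem stmt12 :
    {y : Matrix (Fin 2) (Fin 2) ℂ | ∃ g ∈ SU2, y = g * gᵀ}
      = {y : Matrix (Fin 2) (Fin 2) ℂ | ∃ (z : ℂ) (s : ℝ),
          ‖z‖ ^ 2 + s ^ 2 = 1 ∧
          y = !![z, Complex.I * (s : ℂ); Complex.I * (s : ℂ), conj z]} ∧
    {y : Matrix (Fin 2) (Fin 2) ℂ | ∃ g ∈ SU2, y = g * gᵀ}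
      = {y : Matrix (Fin 2) (Fin 2) ℂ | y ∈ SU2 ∧ yᵀ = y} := by
  constructor
  · ext y
    simp only [Set.mem_setOf_eq]
    constructor
    · rintro ⟨g, hg, rfl⟩
      exact M_sub_A hg
    · rintro ⟨z, s, h, rfl⟩
      obtain ⟨g, hg, hy⟩ := A_sub_M z s h
      exact ⟨g, hg, hy⟩
  · ext y
    simp only [Set.mem_setOf_eq]
    constructor
    · rintro ⟨g, hg, rfl⟩
      exact M_sub_B hg
    · rintro ⟨hy, hsym⟩
      obtain ⟨z, s, h, hyeq⟩ := B_sub_A hy hsym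
      obtain ⟨g, hg, hy2⟩ := A_sub_M z s h
      exact ⟨g, hg, hyeq.trans hy2⟩
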